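/- arXiv:1902.04168 — 4 statements merged into one kernel-verified Lean document; each statement's English description precedes it below -/
import Mathlib

section
/- Let x₀, x_D ∈ ℝ³ with x₀ ≠ x_D, let n₀ ∈ ℝ³ be a unit vector with s₀ := ⟪n₀, x₀ − x_D⟫ ≠ 0, set ρ₀ := ‖x₀ − x_D‖, and define f(x) = (ρ₀²/s₀)·(1 − ρ₀/‖x − x_D‖). Then for every x ≠ x_D, the norm of the gradient satisfies ‖∇f(x)‖ · ‖x − x_D‖² = ρ₀³/|s₀|; in particular ‖∇f(x)‖ decays like 1/‖x‖² as ‖x‖ → ∞. -/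
open scoped RealInnerProductSpace

theorem stmt3 (x₀ xD n₀ : EuclideanSpace ℝ (Fin 3)) (hx : x₀ ≠ xD) (hn₀ : ‖n₀‖ = 1)
    (s₀ ρ₀ : ℝ) (hs₀def : s₀ = ⟪n₀, x₀ - xD⟫) (hs₀ : s₀ ≠ 0) (hρ₀ : ρ₀ = ‖x₀ - xD‖)
    (f : EuclideanSpace ℝ (Fin 3) → ℝ)
    (hf : f = fun x => (ρ₀ ^ 2 / s₀) * (1 - ρ₀ / ‖x - xD‖)) :
    ∀ x : EuclideanSpace ℝ (Fin 3), x ≠ xD →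
      ‖gradient f x‖ * ‖x - xD‖ ^ 2 = ρ₀ ^ 3 / |s₀| := by
  intro x hxneq
  set c := ρ₀ ^ 2 / s₀ with hc
  set u := x - xD with hu
  have hune : u ≠ 0 := sub_ne_zero.mpr hxneq
  set r := ‖u‖ with hr
  have hrpos : (0 : ℝ) < r := norm_pos_iff.mpr hune
  have hrne : r ≠ 0 := ne_of_gt hrpos
  have hρpos : 0 < ρ₀ := hρ₀ ▸ norm_pos_iff.mpr (sub_ne_zero.mpr hx)
  have hsq : Real.sqrt (r ^ 2) = r := Real.sqrt_sq hrpos.le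
  -- derivative of y ↦ ‖y - xD‖² :
  have h1 : HasFDerivAt (fun y : EuclideanSpace ℝ (Fin 3) => y - xD)
      (ContinuousLinearMap.id ℝ _) x := (hasFDerivAt_id x).sub_const xD
  have hLu : innerSL ℝ u = innerSL ℝ x - innerSL ℝ xD := by rw [hu, map_sub]
  have h2 : HasFDerivAt (fun y : EuclideanSpace ℝ (Fin 3) => ‖y - xD‖ ^ 2)
      (2 • innerSL ℝ u) x := by
    rw [hLu]; simpa using h1.norm_sq
  -- 1d derivative of φ(t) = c - c ρ₀ (√t)⁻¹ at t = r² :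
  have hφ1 : HasDerivAt Real.sqrt (1 / (2 * r)) (r ^ 2) := by
    simpa [hsq] using Real.hasDerivAt_sqrt (show (r:ℝ)^2 ≠ 0 by positivity)
  have hφ2 : HasDerivAt (fun t => (Real.sqrt t)⁻¹) (-(1 / (2 * r)) / r ^ 2) (r ^ 2) := by
    have h := hφ1.inv (by rw [hsq]; exact hrne)
    rw [hsq] at h
    exact h
  have hφ3 : HasDerivAt (fun t => c - c * ρ₀ * (Real.sqrt t)⁻¹)
      (-(c * ρ₀ * (-(1 / (2 * r)) / r ^ 2))) (r ^ 2) :=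
    ((hφ2.const_mul (c * ρ₀))).const_sub c
  -- composition:
  have h6 : HasFDerivAt f ((c * ρ₀ / r ^ 3) • innerSL ℝ u) x := by
    have hcomp := hφ3.comp_hasFDerivAt x h2
    have hfe : ((fun t => c - c * ρ₀ * (Real.sqrt t)⁻¹) ∘
        fun y : EuclideanSpace ℝ (Fin 3) => ‖y - xD‖ ^ 2) = f := by
      funext y
      simp only [Function.comp, Real.sqrt_sq (norm_nonneg _), hf]
      ring
    rw [hfe] at hcomp
    refine hcomp.congr_fderiv ?_
    ext y
    simp only [ContinuousLinearMap.coe_smul', Pi.smul_apply, smul_eq_mul,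
      ContinuousLinearMap.smul_apply, nsmul_eq_mul, Nat.cast_ofNat]
    field_simp
  have hgrad : HasGradientAt f ((c * ρ₀ / r ^ 3) • u) x := by
    rw [hasGradientAt_iff_hasFDerivAt]
    refine h6.congr_fderiv ?_
    ext y
    simp [real_inner_smul_left]
  rw [hgrad.gradient]
  rw [norm_smul, ← hr]
  have habs : |c| = ρ₀ ^ 2 / |s₀| := by
    rw [hc, abs_div, abs_of_nonneg (by positivity : (0:ℝ) ≤ ρ₀ ^ 2)]
  rw [Real.norm_eq_abs, abs_div, abs_mul, habs, abs_of_nonneg hρpos.le,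
    abs_of_nonneg (by positivity : (0:ℝ) ≤ r ^ 3)]
  field_simp
end

section
/- Let z_D, r₀, z₀, n_r0, n_z0, φ₀, β ∈ ℝ with n_r0² + n_z0² = 1. Set x_D := (0,0,z_D), x₀ := (r₀, 0, z₀) in ℝ³, assume x₀ ≠ x_D, set ρ₀ := √(r₀² + (z₀ − z_D)²) and s₀ := r₀·n_r0 + (z₀ − z_D)·n_z0, and assume s₀ ≠ 0. Define ψ(x) = φ₀ + β·(ρ₀²/s₀)·(1 − ρ₀/‖x − x_D‖). Then for all r, θ, z, n_r, n_z ∈ ℝ with (r,z) ≠ (0, z_D), writing x = (r·cos θ, r·sin θ, z), n = (n_r·cos θ, n_r·sin θ, n_z), ρ := √(r² + (z − z_D)²) and s := r·n_r + (z − z_D)·n_z, the directional derivative of ψ satisfies ⟪∇ψ(x), n⟫ = β·(ρ₀/ρ)³·(s/s₀). -/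
open scoped RealInnerProductSpace
open Real

set_option maxHeartbeats 1000000

lemma hasFDerivAt_inv_norm_sub {E : Type*} [NormedAddCommGroup E] [InnerProductSpace ℝ E]
    (xD x : E) (h : x - xD ≠ 0) :
    HasFDerivAt (fun y => ‖y - xD‖⁻¹)
      ((-(‖x - xD‖ ^ 3)⁻¹) • innerSL ℝ (x - xD)) x := by
  have hnorm : ‖x - xD‖ ≠ 0 := norm_ne_zero_iff.mpr h
  have hsq : (‖x - xD‖ : ℝ) ^ 2 ≠ 0 := pow_ne_zero _ hnorm
  have hu : HasFDerivAt (fun y => ‖y - xD‖ ^ 2) (2 • innerSL ℝ (x - xD)) x := by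
    have := ((hasFDerivAt_id x).sub_const xD).norm_sq
    simpa using this
  have hroot : Real.sqrt (‖x - xD‖ ^ 2) = ‖x - xD‖ := Real.sqrt_sq (norm_nonneg _)
  have hsqrt : HasDerivAt (fun t : ℝ => (Real.sqrt t)⁻¹)
      (-(1 / (2 * ‖x - xD‖)) / ‖x - xD‖ ^ 2) (‖x - xD‖ ^ 2) := by
    have h1 := Real.hasDerivAt_sqrt hsq
    have h2 := h1.inv (by rw [hroot]; exact hnorm)
    rw [hroot] at h2
    exact h2
  have hcomp := hsqrt.comp_hasFDerivAt x hu
  have heq : (fun y => ‖y - xD‖⁻¹) = (fun t : ℝ => (Real.sqrt t)⁻¹) ∘ (fun y => ‖y - xD‖ ^ 2) := by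
    funext y
    simp [Function.comp, Real.sqrt_sq (norm_nonneg _)]
  rw [heq]
  refine hcomp.congr_fderiv ?_
  ext w
  simp only [ContinuousLinearMap.coe_smul', Pi.smul_apply, smul_eq_mul,
    ContinuousLinearMap.smul_apply, two_smul, ContinuousLinearMap.add_apply]
  ring


lemma hasGradientAt_of_innerSL {E : Type*} [NormedAddCommGroup E] [InnerProductSpace ℝ E]
    [CompleteSpace E] {f : E → ℝ} {v x : E}
    (h : HasFDerivAt f (innerSL ℝ v) x) : HasGradientAt f v x := by
  rw [hasGradientAt_iff_hasFDerivAt]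
  exact h

theorem stmt6 (zD r₀ z₀ nr0 nz0 φ₀ β : ℝ) (hn : nr0 ^ 2 + nz0 ^ 2 = 1)
    (xD x₀ : EuclideanSpace ℝ (Fin 3))
    (hxD : xD = (WithLp.equiv 2 (Fin 3 → ℝ)).symm ![0, 0, zD])
    (hx₀ : x₀ = (WithLp.equiv 2 (Fin 3 → ℝ)).symm ![r₀, 0, z₀])
    (hne : x₀ ≠ xD)
    (ρ₀ s₀ : ℝ) (hρ₀ : ρ₀ = Real.sqrt (r₀ ^ 2 + (z₀ - zD) ^ 2))
    (hs₀def : s₀ = r₀ * nr0 + (z₀ - zD) * nz0) (hs₀ : s₀ ≠ 0)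
    (ψ : EuclideanSpace ℝ (Fin 3) → ℝ)
    (hψ : ψ = fun x => φ₀ + β * ((ρ₀ ^ 2 / s₀) * (1 - ρ₀ / ‖x - xD‖))) :
    ∀ r θ z nr nz : ℝ, (r, z) ≠ (0, zD) →
      ⟪gradient ψ ((WithLp.equiv 2 (Fin 3 → ℝ)).symm ![r * Real.cos θ, r * Real.sin θ, z]),
        (WithLp.equiv 2 (Fin 3 → ℝ)).symm ![nr * Real.cos θ, nr * Real.sin θ, nz]⟫ =
      β * (ρ₀ / Real.sqrt (r ^ 2 + (z - zD) ^ 2)) ^ 3 *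
        ((r * nr + (z - zD) * nz) / s₀) := by
  intro r θ z nr nz hrz
  set x : EuclideanSpace ℝ (Fin 3) :=
    (WithLp.equiv 2 (Fin 3 → ℝ)).symm ![r * Real.cos θ, r * Real.sin θ, z] with hx
  set n : EuclideanSpace ℝ (Fin 3) :=
    (WithLp.equiv 2 (Fin 3 → ℝ)).symm ![nr * Real.cos θ, nr * Real.sin θ, nz] with hn'
  have hsum_pos : 0 < r ^ 2 + (z - zD) ^ 2 := by
    rcases lt_or_eq_of_le (by positivity : (0:ℝ) ≤ r ^ 2 + (z - zD) ^ 2) with h | h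
    · exact h
    · exfalso
      have hr : r = 0 := by nlinarith [sq_nonneg r, sq_nonneg (z - zD)]
      have hz : z = zD := by nlinarith [sq_nonneg r, sq_nonneg (z - zD)]
      exact hrz (by simp [hr, hz])
  set ρ : ℝ := Real.sqrt (r ^ 2 + (z - zD) ^ 2) with hρ
  have hρpos : 0 < ρ := Real.sqrt_pos.mpr hsum_pos
  have hρne : ρ ≠ 0 := ne_of_gt hρpos
  have hnormx : ‖x - xD‖ = ρ := by
    rw [hxD, hρ]
    rw [show x - (WithLp.equiv 2 (Fin 3 → ℝ)).symm ![0, 0, zD]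
        = (WithLp.equiv 2 (Fin 3 → ℝ)).symm ![r * Real.cos θ, r * Real.sin θ, z - zD] by
      apply (WithLp.equiv 2 (Fin 3 → ℝ)).injective
      ext i
      fin_cases i <;> simp [hx]]
    rw [EuclideanSpace.norm_eq]
    congr 1
    simp [Fin.sum_univ_three]
    have hc := Real.sin_sq_add_cos_sq θ
    ring_nf
    nlinarith [Real.sin_sq_add_cos_sq θ]
  have hxne : x - xD ≠ 0 := by
    intro h0
    rw [h0, norm_zero] at hnormx
    exact hρne hnormx.symm
  -- Gradient computation
  set a : ℝ := β * (ρ₀ ^ 2 / s₀) * ρ₀ * (‖x - xD‖ ^ 3)⁻¹ with ha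
  have hF : HasFDerivAt ψ (innerSL ℝ (a • (x - xD))) x := by
    have hfun : ψ = fun y => φ₀ + β * (ρ₀ ^ 2 / s₀ * (1 - ρ₀ * ‖y - xD‖⁻¹)) := by
      rw [hψ]; funext y; rw [div_eq_mul_inv ρ₀]
    rw [hfun]
    have h1 := hasFDerivAt_inv_norm_sub xD x hxne
    have h3 := ((((h1.const_mul ρ₀).const_sub 1).const_mul (ρ₀ ^ 2 / s₀)).const_mul β).const_add φ₀
    refine h3.congr_fderiv ?_
    ext w
    simp only [ContinuousLinearMap.coe_smul', Pi.smul_apply, smul_eq_mul,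
      ContinuousLinearMap.neg_apply, innerSL_apply_apply, real_inner_smul_left, ha]
    ring
  have hG : HasGradientAt ψ (a • (x - xD)) x := hasGradientAt_of_innerSL hF
  rw [hG.gradient]
  have hinner : ⟪x - xD, n⟫ = r * nr + (z - zD) * nz := by
    rw [inner_sub_left]
    rw [hx, hxD, hn']
    simp only [PiLp.inner_apply, WithLp.equiv_symm_apply, Fin.sum_univ_three,
      Matrix.cons_val_zero, Matrix.cons_val_one, Matrix.head_cons, RCLike.inner_apply,
      conj_trivial, Matrix.cons_val_two, Matrix.tail_cons]
    linear_combination (r * nr) * Real.sin_sq_add_cos_sq θ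
  rw [real_inner_smul_left, hinner, ha, hnormx]
  field_simp
end

section
/- Let x₀, x_D ∈ ℝ² with x₀ ≠ x_D, and let n^L, n^R ∈ ℝ² be unit vectors with ⟪n^L, x₀ − x_D⟫ ≠ 0 and ⟪n^R, x₀ − x_D⟫ = 0. Define f(x) = (‖x₀ − x_D‖² / ⟪n^L, x₀ − x_D⟫) · ln(‖x − x_D‖ / ‖x₀ − x_D‖). Then f is harmonic on ℝ² \ {x_D}, f(x₀) = 0, ⟪∇f(x₀), n^L⟫ = 1, and ⟪∇f(x₀), n^R⟫ = 0. -/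
open scoped RealInnerProductSpace
open EuclideanSpace

/-- A function `u` is harmonic on a set `U ⊆ ℝⁿ` (as `EuclideanSpace ℝ (Fin n)`) if it is
twice continuously differentiable on `U` and its Laplacian, i.e. the sum of the second
derivatives `∂²u/∂xᵢ²` along the standard basis directions, vanishes on `U`. -/
def HarmonicOn {n : ℕ} (u : EuclideanSpace ℝ (Fin n) → ℝ)
    (U : Set (EuclideanSpace ℝ (Fin n))) : Prop :=
  ContDiffOn ℝ 2 u U ∧ ∀ x ∈ U,
    ∑ i : Fin n, iteratedFDeriv ℝ 2 u x
      ![EuclideanSpace.single i (1 : ℝ), EuclideanSpace.single i (1 : ℝ)] = 0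


section aux
variable (xD : EuclideanSpace ℝ (Fin 2)) (c : ℝ)

local notation "E" => EuclideanSpace ℝ (Fin 2)

noncomputable def innerSLR : E →L[ℝ] (E →L[ℝ] ℝ) := innerSL ℝ

noncomputable def Phi (x : E) : E →L[ℝ] ℝ :=
  (c / ⟪x - xD, x - xD⟫) • innerSL ℝ (x - xD)

lemma hasFDerivAt_q (x : E) :
    HasFDerivAt (fun y : E => (⟪y - xD, y - xD⟫ : ℝ))
      ((2 : ℝ) • (innerSL ℝ (x - xD)) : E →L[ℝ] ℝ) x := by
  have h := (((hasFDerivAt_id x).sub_const xD).inner ℝ ((hasFDerivAt_id x).sub_const xD))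
  refine h.congr_fderiv ?_
  ext v
  simp [real_inner_comm]
  rw [inner_sub_right, real_inner_comm x v, real_inner_comm xD v]; ring

lemma q_ne (x : E) (hx : x ≠ xD) : (⟪x - xD, x - xD⟫ : ℝ) ≠ 0 := by
  rw [real_inner_self_eq_norm_sq]
  exact pow_ne_zero _ (norm_ne_zero_iff.2 (sub_ne_zero.2 hx))

lemma hasFDerivAt_F (x : E) (hx : x ≠ xD) :
    HasFDerivAt (fun y : E => (c/2) * Real.log ⟪y - xD, y - xD⟫) (Phi xD c x) x := by
  have hq := q_ne xD x hx
  have h := ((Real.hasDerivAt_log hq).comp_hasFDerivAt x (hasFDerivAt_q xD x)).const_mul (c/2)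
  refine h.congr_fderiv ?_
  ext v
  simp [Phi]
  ring

noncomputable def Psi (x : E) : E →L[ℝ] (E →L[ℝ] ℝ) :=
  (c / ⟪x - xD, x - xD⟫) • innerSLR +
    ((-(⟪x - xD, x - xD⟫^2)⁻¹ * c) • ((2:ℝ) • (innerSL ℝ (x - xD)) : E →L[ℝ] ℝ)).smulRight
      (innerSL ℝ (x - xD))

lemma hasFDerivAt_Phi (x : E) (hx : x ≠ xD) :
    HasFDerivAt (Phi xD c) (Psi xD c x) x := by
  have hq := q_ne xD x hx
  have hs : HasFDerivAt (fun y : E => c / ⟪y - xD, y - xD⟫)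
      ((-(⟪x - xD, x - xD⟫^2)⁻¹ * c) • ((2:ℝ) • (innerSL ℝ (x - xD)) : E →L[ℝ] ℝ)) x := by
    have h := ((hasDerivAt_inv hq).comp_hasFDerivAt x (hasFDerivAt_q xD x)).const_mul c
    have h2 : (fun y : E => c / ⟪y - xD, y - xD⟫)
        = fun y => c * ((fun t : ℝ => t⁻¹) ∘ fun y : E => ⟪y - xD, y - xD⟫) y := by
      funext y; simp [div_eq_mul_inv]
    rw [h2]
    refine h.congr_fderiv ?_
    ext v; simp
    ring
  have hA : HasFDerivAt (fun y : E => (innerSL ℝ (y - xD) : E →L[ℝ] ℝ)) innerSLR x := by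
    have : (fun y : E => (innerSL ℝ (y - xD) : E →L[ℝ] ℝ))
        = fun y => innerSLR y - innerSLR xD := by
      funext y; simp [innerSLR, map_sub]
    rw [this]
    exact innerSLR.hasFDerivAt.sub_const _
  have := hs.smul hA
  exact this

end aux

theorem stmt9 (x₀ xD nL nR : EuclideanSpace ℝ (Fin 2)) (hx : x₀ ≠ xD)
    (hnL : ‖nL‖ = 1) (hnR : ‖nR‖ = 1)
    (hL : ⟪nL, x₀ - xD⟫ ≠ 0) (hR : ⟪nR, x₀ - xD⟫ = 0)
    (f : EuclideanSpace ℝ (Fin 2) → ℝ)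
    (hf : f = fun x => (‖x₀ - xD‖ ^ 2 / ⟪nL, x₀ - xD⟫) * Real.log (‖x - xD‖ / ‖x₀ - xD‖)) :
    HarmonicOn f {xD}ᶜ ∧ f x₀ = 0 ∧
    ⟪gradient f x₀, nL⟫ = 1 ∧ ⟪gradient f x₀, nR⟫ = 0 := by
  set c : ℝ := ‖x₀ - xD‖ ^ 2 / ⟪nL, x₀ - xD⟫ with hc
  set b : ℝ := ‖x₀ - xD‖ with hb
  have hb0 : b ≠ 0 := norm_ne_zero_iff.2 (sub_ne_zero.2 hx)
  -- f agrees with the smooth model away from xD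
  have hFf : ∀ x, x ≠ xD →
      f x = (c/2) * Real.log ⟪x - xD, x - xD⟫ - c * Real.log b := by
    intro x hxD
    have h1 : ‖x - xD‖ ≠ 0 := norm_ne_zero_iff.2 (sub_ne_zero.2 hxD)
    rw [hf]
    simp only []
    rw [Real.log_div h1 hb0, real_inner_self_eq_norm_sq, Real.log_pow]
    push_cast
    ring
  have hev : ∀ x : EuclideanSpace ℝ (Fin 2), x ≠ xD →
      f =ᶠ[nhds x] fun y => (c/2) * Real.log ⟪y - xD, y - xD⟫ - c * Real.log b := by
    intro x hxD
    filter_upwards [isOpen_compl_singleton.eventually_mem (by simpa using hxD :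
      x ∈ ({xD}ᶜ : Set (EuclideanSpace ℝ (Fin 2))))] with y hy
    exact hFf y (by simpa using hy)
  have hder : ∀ x, x ≠ xD → HasFDerivAt f (Phi xD c x) x := by
    intro x hxD
    exact ((hasFDerivAt_F xD c x hxD).sub_const (c * Real.log b)).congr_of_eventuallyEq
      (hev x hxD)
  -- gradient at x₀
  have hg : HasGradientAt f ((⟪nL, x₀ - xD⟫)⁻¹ • (x₀ - xD)) x₀ := by
    rw [hasGradientAt_iff_hasFDerivAt]
    have : (InnerProductSpace.toDual ℝ (EuclideanSpace ℝ (Fin 2)))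
        ((⟪nL, x₀ - xD⟫)⁻¹ • (x₀ - xD)) = Phi xD c x₀ := by
      have h2 : ‖x₀ - xD‖ ^ 2 ≠ 0 := pow_ne_zero _ (norm_ne_zero_iff.2 (sub_ne_zero.2 hx))
      have hcoef : c / (⟪x₀ - xD, x₀ - xD⟫ : ℝ) = (⟪nL, x₀ - xD⟫)⁻¹ := by
        rw [real_inner_self_eq_norm_sq, hc, hb]
        rw [div_div, mul_comm, ← div_div, div_self h2, one_div]
      ext v
      rw [InnerProductSpace.toDual_apply_apply, real_inner_smul_left]
      simp only [Phi, ContinuousLinearMap.smul_apply, innerSL_apply_apply, smul_eq_mul]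
      rw [hcoef]
    rw [this]
    exact hder x₀ hx
  have hgrad : gradient f x₀ = (⟪nL, x₀ - xD⟫)⁻¹ • (x₀ - xD) := hg.gradient
  refine ⟨⟨?_, ?_⟩, ?_, ?_, ?_⟩
  · -- ContDiffOn
    intro x hxD
    have hxD' : x ≠ xD := by simpa using hxD
    have hq0 := q_ne xD x hxD'
    have hqc : ContDiff ℝ 2 (fun y : EuclideanSpace ℝ (Fin 2) => (⟪y - xD, y - xD⟫ : ℝ)) :=
      (contDiff_id.sub contDiff_const).inner ℝ (contDiff_id.sub contDiff_const)
    have hlog : ContDiffAt ℝ 2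
        (fun y : EuclideanSpace ℝ (Fin 2) => Real.log ⟪y - xD, y - xD⟫) x :=
      ContDiffAt.comp (g := Real.log) x (Real.contDiffAt_log.2 hq0) hqc.contDiffAt
    have hF : ContDiffAt ℝ 2
        (fun y : EuclideanSpace ℝ (Fin 2) =>
          (c/2) * Real.log ⟪y - xD, y - xD⟫ - c * Real.log b) x :=
      ((contDiffAt_const.mul hlog).sub contDiffAt_const)
    exact (hF.congr_of_eventuallyEq (hev x hxD')).contDiffWithinAt
  · -- Laplacian
    intro x hxD
    have hxD' : x ≠ xD := by simpa using hxD
    have hq0 := q_ne xD x hxD'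
    -- second derivative is Psi
    have h2 : HasFDerivAt (fderiv ℝ f) (Psi xD c x) x := by
      refine (hasFDerivAt_Phi xD c x hxD').congr_of_eventuallyEq ?_
      filter_upwards [isOpen_compl_singleton.eventually_mem (by simpa using hxD' :
        x ∈ ({xD}ᶜ : Set (EuclideanSpace ℝ (Fin 2))))] with y hy
      exact (hder y (by simpa using hy)).fderiv
    have h3 : ∀ i : Fin 2, iteratedFDeriv ℝ 2 f x
        ![EuclideanSpace.single i (1:ℝ), EuclideanSpace.single i (1:ℝ)]
        = Psi xD c x (EuclideanSpace.single i (1:ℝ)) (EuclideanSpace.single i (1:ℝ)) := by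
      intro i
      rw [iteratedFDeriv_two_apply, h2.fderiv]
      simp
    rw [Fin.sum_univ_two, h3 0, h3 1]
    have hy2 : (⟪x - xD, x - xD⟫ : ℝ)
        = (x - xD) 0 * (x - xD) 0 + (x - xD) 1 * (x - xD) 1 := by
      simp [EuclideanSpace.norm_sq_eq, Fin.sum_univ_two]
      ring
    simp only [Psi, innerSLR, ContinuousLinearMap.add_apply, ContinuousLinearMap.smul_apply,
      ContinuousLinearMap.smulRight_apply, innerSL_apply_apply, EuclideanSpace.inner_single_left,
      EuclideanSpace.inner_single_right, conj_trivial, one_mul, mul_one, smul_eq_mul]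
    simp [EuclideanSpace.single_apply]
    rw [hy2] at hq0
    simp only [PiLp.sub_apply] at hq0
    field_simp
    simp [EuclideanSpace.norm_sq_eq]
    left; right
    erw [innerSL_apply_apply, innerSL_apply_apply]
    simp
    ring
  · rw [hf]; simp [div_self hb0]
    exact Or.inr (Or.inr (Or.inl (div_self hb0)))
  · rw [hgrad, real_inner_smul_left, real_inner_comm]
    exact inv_mul_cancel₀ (by rwa [real_inner_comm] at hL)
  · rw [hgrad, real_inner_smul_left, real_inner_comm nR (x₀ - xD), hR, mul_zero]
end

section
/- Let x₀, x_D ∈ ℝ³ with x₀ ≠ x_D, let n₀ ∈ ℝ³ be a unit vector with s₀ := ⟪n₀, x₀ − x_D⟫ ≠ 0, set ρ₀ := ‖x₀ − x_D‖, let β ∈ ℝ, and define f(x) = (ρ₀²/s₀)·(1 − ρ₀/‖x − x_D‖). Let σ be the surface measure on the unit sphere S² ⊂ ℝ³ induced by Lebesgue measure (so that σ(S²) = 4π), and let H := {ω ∈ S² : ω₃ < 0} denote the open lower hemisphere. Then lim_{a → ∞} a² · ∫_{ω ∈ H} β·⟪∇f(a·ω), ω⟫ / ‖a·ω − x₀‖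 dσ(ω) = 0. -/
open scoped RealInnerProductSpace
open Filter MeasureTheory Metric Real

theorem aux_hasGradientAt (xD : EuclideanSpace ℝ (Fin 3)) (c ρ : ℝ)
    (x : EuclideanSpace ℝ (Fin 3)) (hx : x ≠ xD) :
    HasGradientAt (fun x => c * (1 - ρ / ‖x - xD‖))
      ((c * ρ / ‖x - xD‖ ^ 3) • (x - xD)) x := by
  have hy : x - xD ≠ 0 := sub_ne_zero.2 hx
  have hr : (0:ℝ) < ‖x - xD‖ := norm_pos_iff.2 hy
  have h1 : HasFDerivAt (fun z : EuclideanSpace ℝ (Fin 3) => ‖z - xD‖ ^ 2)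
      (2 • (innerSL ℝ (x - xD)).comp (ContinuousLinearMap.id ℝ _)) x :=
    ((hasFDerivAt_id x).sub_const xD).norm_sq
  have h2 := (Real.hasDerivAt_sqrt (x := ‖x - xD‖ ^ 2)
      (by positivity)).comp_hasFDerivAt x h1
  have hfun : (Real.sqrt ∘ fun z : EuclideanSpace ℝ (Fin 3) => ‖z - xD‖ ^ 2)
      = fun z => ‖z - xD‖ := by
    funext z; simp [Function.comp, Real.sqrt_sq (norm_nonneg _)]
  rw [hfun] at h2
  have h4 := (hasDerivAt_inv hr.ne').comp_hasFDerivAt x h2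
  have h5 := (h4.const_mul (c * ρ)).const_sub c
  have hfun2 : (fun z : EuclideanSpace ℝ (Fin 3) => c - c * ρ * (Inv.inv ∘ fun z => ‖z - xD‖) z)
      = fun z => c * (1 - ρ / ‖z - xD‖) := by
    funext z; simp [Function.comp]; ring
  rw [hfun2] at h5
  rw [hasGradientAt_iff_hasFDerivAt]
  refine h5.congr_fderiv ?_
  ext u
  simp only [InnerProductSpace.toDual_apply_apply, ContinuousLinearMap.neg_apply,
    ContinuousLinearMap.smul_apply, ContinuousLinearMap.coe_smul', Pi.smul_apply,
    ContinuousLinearMap.coe_comp', Function.comp_apply, ContinuousLinearMap.coe_id', id_eq,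
    innerSL_apply_apply, smul_eq_mul, real_inner_smul_left, Real.sqrt_sq hr.le]
  field_simp
  ring

theorem stmt13 (x₀ xD n₀ : EuclideanSpace ℝ (Fin 3)) (hx : x₀ ≠ xD) (hn₀ : ‖n₀‖ = 1)
    (s₀ ρ₀ β : ℝ) (hs₀def : s₀ = ⟪n₀, x₀ - xD⟫) (hs₀ : s₀ ≠ 0) (hρ₀ : ρ₀ = ‖x₀ - xD‖)
    (f : EuclideanSpace ℝ (Fin 3) → ℝ)
    (hf : f = fun x => (ρ₀ ^ 2 / s₀) * (1 - ρ₀ / ‖x - xD‖))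
    (σ : Measure (sphere (0 : EuclideanSpace ℝ (Fin 3)) 1))
    (hσ : σ = (volume : Measure (EuclideanSpace ℝ (Fin 3))).toSphere)
    (H : Set (sphere (0 : EuclideanSpace ℝ (Fin 3)) 1))
    (hH : H = {ω | (ω : EuclideanSpace ℝ (Fin 3)) 2 < 0}) :
    Tendsto
      (fun a : ℝ => a ^ 2 *
        ∫ ω in H, β * ⟪gradient f (a • (ω : EuclideanSpace ℝ (Fin 3))),
            (ω : EuclideanSpace ℝ (Fin 3))⟫ /
          ‖a • (ω : EuclideanSpace ℝ (Fin 3)) - x₀‖ ∂σ)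
      atTop (nhds 0) := by
  subst hσ hf
  have hx0 := norm_nonneg x₀
  have hxD := norm_nonneg xD
  set c : ℝ := ρ₀ ^ 2 / s₀ with hc
  set μ := (volume : Measure (EuclideanSpace ℝ (Fin 3))).toSphere with hμ
  have hμtop : μ Set.univ ≠ ⊤ := measure_ne_top μ _
  set S : ℝ := (μ Set.univ).toReal with hS
  have hS0 : 0 ≤ S := ENNReal.toReal_nonneg
  set K : ℝ := |β| * |c * ρ₀| with hK
  have hK0 : 0 ≤ K := by positivity
  set C : ℝ := 8 * K * S with hC
  apply squeeze_zero_norm' (a := fun x => C / x)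
  · filter_upwards [eventually_ge_atTop (2 * ‖x₀‖ + 2 * ‖xD‖ + 2)] with a ha
    have ha2 : (2:ℝ) ≤ a := by linarith
    have ha0 : (0:ℝ) < a := by linarith
    have ha2pos : (0:ℝ) < a / 2 := by linarith
    -- pointwise bound on the sphere
    have hbound : ∀ ω : sphere (0 : EuclideanSpace ℝ (Fin 3)) 1,
        ‖β * ⟪gradient (fun x => c * (1 - ρ₀ / ‖x - xD‖))
            (a • (ω : EuclideanSpace ℝ (Fin 3))), (ω : EuclideanSpace ℝ (Fin 3))⟫ /
          ‖a • (ω : EuclideanSpace ℝ (Fin 3)) - x₀‖‖ ≤ K / (a / 2) ^ 3 := by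
      intro ω
      have hω : ‖(ω : EuclideanSpace ℝ (Fin 3))‖ = 1 := mem_sphere_zero_iff_norm.1 ω.2
      have hnaω : ‖a • (ω : EuclideanSpace ℝ (Fin 3))‖ = a := by
        rw [norm_smul, hω, Real.norm_eq_abs, abs_of_pos ha0, mul_one]
      have hD : a / 2 ≤ ‖a • (ω : EuclideanSpace ℝ (Fin 3)) - xD‖ := by
        have := norm_sub_norm_le (a • (ω : EuclideanSpace ℝ (Fin 3))) xD
        rw [hnaω] at this
        linarith
      have h0 : a / 2 ≤ ‖a • (ω : EuclideanSpace ℝ (Fin 3)) - x₀‖ := by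
        have := norm_sub_norm_le (a • (ω : EuclideanSpace ℝ (Fin 3))) x₀
        rw [hnaω] at this
        linarith
      have hne : a • (ω : EuclideanSpace ℝ (Fin 3)) ≠ xD := by
        intro h
        rw [h, sub_self, norm_zero] at hD
        linarith
      have hDpos : (0:ℝ) < ‖a • (ω : EuclideanSpace ℝ (Fin 3)) - xD‖ :=
        lt_of_lt_of_le ha2pos hD
      have hgrad : gradient (fun x => c * (1 - ρ₀ / ‖x - xD‖))
            (a • (ω : EuclideanSpace ℝ (Fin 3)))
          = ((c * ρ₀ / ‖a • (ω : EuclideanSpace ℝ (Fin 3)) - xD‖ ^ 3) •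
              (a • (ω : EuclideanSpace ℝ (Fin 3)) - xD)) :=
        (aux_hasGradientAt xD c ρ₀ _ hne).gradient
      have hgn : ‖gradient (fun x => c * (1 - ρ₀ / ‖x - xD‖))
            (a • (ω : EuclideanSpace ℝ (Fin 3)))‖
          = |c * ρ₀| / ‖a • (ω : EuclideanSpace ℝ (Fin 3)) - xD‖ ^ 2 := by
        rw [hgrad, norm_smul, Real.norm_eq_abs, abs_div,
          abs_of_pos (by positivity : (0:ℝ) < ‖a • (ω : EuclideanSpace ℝ (Fin 3)) - xD‖ ^ 3)]
        field_simp
      have hinner : |⟪gradient (fun x => c * (1 - ρ₀ / ‖x - xD‖))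
            (a • (ω : EuclideanSpace ℝ (Fin 3))), (ω : EuclideanSpace ℝ (Fin 3))⟫|
          ≤ |c * ρ₀| / (a / 2) ^ 2 := by
        calc _ ≤ ‖gradient (fun x => c * (1 - ρ₀ / ‖x - xD‖))
              (a • (ω : EuclideanSpace ℝ (Fin 3)))‖ * ‖(ω : EuclideanSpace ℝ (Fin 3))‖ :=
              abs_real_inner_le_norm _ _
          _ = |c * ρ₀| / ‖a • (ω : EuclideanSpace ℝ (Fin 3)) - xD‖ ^ 2 := by
              rw [hω, hgn, mul_one]
          _ ≤ |c * ρ₀| / (a / 2) ^ 2 := by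
              apply div_le_div_of_nonneg_left (abs_nonneg _) (by positivity)
              exact pow_le_pow_left₀ ha2pos.le hD 2
      rw [Real.norm_eq_abs, abs_div, abs_mul, abs_of_pos (lt_of_lt_of_le ha2pos h0)]
      calc |β| * |⟪gradient (fun x => c * (1 - ρ₀ / ‖x - xD‖))
              (a • (ω : EuclideanSpace ℝ (Fin 3))), (ω : EuclideanSpace ℝ (Fin 3))⟫| /
            ‖a • (ω : EuclideanSpace ℝ (Fin 3)) - x₀‖
          ≤ |β| * (|c * ρ₀| / (a / 2) ^ 2) / (a / 2) := by
            apply div_le_div₀ (by positivity) (by gcongr) ha2pos h0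
        _ = K / (a / 2) ^ 3 := by rw [hK]; field_simp
    -- integral bound
    have hint : ‖∫ ω in H, β * ⟪gradient (fun x => c * (1 - ρ₀ / ‖x - xD‖))
          (a • (ω : EuclideanSpace ℝ (Fin 3))), (ω : EuclideanSpace ℝ (Fin 3))⟫ /
          ‖a • (ω : EuclideanSpace ℝ (Fin 3)) - x₀‖ ∂μ‖ ≤ K / (a / 2) ^ 3 * S := by
      have h1 := norm_integral_le_of_norm_le_const (μ := μ.restrict H)
        (C := K / (a / 2) ^ 3) (Filter.Eventually.of_forall fun ω => hbound ω)
      refine h1.trans ?_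
      apply mul_le_mul_of_nonneg_left _ (by positivity)
      rw [hS]
      exact ENNReal.toReal_mono hμtop
        (by rw [Measure.restrict_apply_univ]; exact measure_mono (Set.subset_univ _))
    have hnorm : ‖a ^ 2 * ∫ ω in H, β * ⟪gradient (fun x => c * (1 - ρ₀ / ‖x - xD‖))
          (a • (ω : EuclideanSpace ℝ (Fin 3))), (ω : EuclideanSpace ℝ (Fin 3))⟫ /
          ‖a • (ω : EuclideanSpace ℝ (Fin 3)) - x₀‖ ∂μ‖
        = a ^ 2 * ‖∫ ω in H, β * ⟪gradient (fun x => c * (1 - ρ₀ / ‖x - xD‖))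
          (a • (ω : EuclideanSpace ℝ (Fin 3))), (ω : EuclideanSpace ℝ (Fin 3))⟫ /
          ‖a • (ω : EuclideanSpace ℝ (Fin 3)) - x₀‖ ∂μ‖ := by
      rw [norm_mul, Real.norm_of_nonneg (by positivity : (0:ℝ) ≤ a ^ 2)]
    rw [hnorm]
    calc a ^ 2 * ‖∫ ω in H, β * ⟪gradient (fun x => c * (1 - ρ₀ / ‖x - xD‖))
          (a • (ω : EuclideanSpace ℝ (Fin 3))), (ω : EuclideanSpace ℝ (Fin 3))⟫ /
          ‖a • (ω : EuclideanSpace ℝ (Fin 3)) - x₀‖ ∂μ‖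
        ≤ a ^ 2 * (K / (a / 2) ^ 3 * S) := by gcongr
      _ = C / a := by rw [hC]; field_simp; ring
  · exact Tendsto.div_atTop tendsto_const_nhds tendsto_id
end
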